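/- If two pointed epistemic models are collectively n-bisimilar, then they satisfy the same formulas of the language with distributed knowledge operators D_B of modal depth at most n. -/
import Mathlib


namespace Stmt12

/-- The epistemic language with distributed knowledge: `p | ¬φ | φ∧φ | D_B φ`
(for nonempty groups `B ⊆ A`). -/
inductive Form (A P : Type) : Type
  | atom : P → Form A P
  | neg : Form A P → Form A P
  | conj : Form A P → Form A P → Form A P
  | dk : (B : Set A) → B.Nonempty → Form A P → Form A P

/-- Modal depth. -/
def md {A P : Type} : Form A P → ℕ
  | .atom _ => 0
  | .neg f => md f
  | .conj f g => max (md f) (md g)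
  | .dk _ _ f => md f + 1

/-- Satisfaction: `D_B φ` holds at `w` iff `φ` holds at all `v` with `v ∼_B w`,
where `∼_B = ⋂_{a∈B} ∼_a`. -/
def Sat {A P W : Type} (sim : A → W → W → Prop) (L : W → Set P) :
    Form A P → W → Prop
  | .atom p, w => p ∈ L w
  | .neg f, w => ¬ Sat sim L f w
  | .conj f g, w => Sat sim L f w ∧ Sat sim L g w
  | .dk B _ f, w => ∀ v, (∀ a ∈ B, sim a w v) → Sat sim L f v

/-- If two pointed epistemic models are collectively `n`-bisimilar, then they
satisfy the same formulas of modal depth at most `n`. -/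
theorem nbisim_implies_same_formulas (A P W W' : Type)
    (sim : A → W → W → Prop) (L : W → Set P)
    (sim' : A → W' → W' → Prop) (L' : W' → Set P)
    (Z : ℕ → W → W' → Prop)
    (hatoms : ∀ k x y, Z k x y → L x = L' y)
    (hforth : ∀ k, ∀ B : Set A, B.Nonempty → ∀ x x' y, Z (k + 1) x y →
      (∀ a ∈ B, sim a x x') → ∃ y', (∀ a ∈ B, sim' a y y') ∧ Z k x' y')
    (hback : ∀ k, ∀ B : Set A, B.Nonempty → ∀ x y y', Z (k + 1) x y →
      (∀ a ∈ B, sim' a y y') → ∃ x', (∀ a ∈ B, sim a x x') ∧ Z k x' y') :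
    ∀ (m : ℕ) (x : W) (y : W'), Z m x y →
      ∀ f : Form A P, md f ≤ m → (Sat sim L f x ↔ Sat sim' L' f y) := by
  intro m x y hZ f
  induction f generalizing m x y with
  | atom p =>
    intro _
    simp only [Sat, hatoms m x y hZ]
  | neg f ih =>
    intro hmd
    simp only [Sat]
    exact not_congr (ih m x y hZ hmd)
  | conj f g ihf ihg =>
    intro hmd
    simp only [md, max_le_iff] at hmd
    exact and_congr (ihf m x y hZ hmd.1) (ihg m x y hZ hmd.2)
  | dk B hB f ih =>
    intro hmd
    simp only [md] at hmd
    obtain ⟨k, rfl⟩ : ∃ k, m = k + 1 := ⟨m - 1, by omega⟩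
    have hk : md f ≤ k := by omega
    constructor
    · intro h y' hy'
      obtain ⟨x', hx', hZ'⟩ := hback k B hB x y y' hZ hy'
      exact (ih k x' y' hZ' hk).mp (h x' hx')
    · intro h x' hx'
      obtain ⟨y', hy', hZ'⟩ := hforth k B hB x x' y hZ hx'
      exact (ih k x' y' hZ' hk).mpr (h y' hy')

end Stmt12
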